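/- Let L_1, …, L_N be n×n complex GPM Lindblad operators, L_α = P_{σ_α} · D_α, and let Ω be the associated weight matrix with basins N_1, …, N_{n_B} and N_B their union. Let P_η be the diagonal 0-1 matrix projecting onto the coordinates in N_η and P_B = ∑_η P_η. Then for every α and every η, P_η commutes with P_B · L_α · P_B; moreover P_η commutes with P_B · H · P_B for every diagonal matrix H. -/

import Mathlib

open scoped Classical

/-- The permutation matrix of `σ`: entry `(j,k)` is `1` iff `j = σ k`. -/
def permMat (n : ℕ) (σ : Equiv.Perm (Fin n)) : Matrix (Fin n) (Fin n) ℂ :=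
  Matrix.of fun j k => if j = σ k then 1 else 0

/-- The weight matrix associated to Lindblad operators `L α`:
`Ω j k = ∑ α |(L α) j k|²` for `j ≠ k`, with zero column sums. -/
noncomputable def weightMat {n N : ℕ} (L : Fin N → Matrix (Fin n) (Fin n) ℂ) :
    Matrix (Fin n) (Fin n) ℝ :=
  Matrix.of fun j k =>
    if j = k then -∑ l ∈ Finset.univ.erase k, ∑ α, ‖L α l k‖ ^ 2
    else ∑ α, ‖L α j k‖ ^ 2

/-- Edge of the digraph `G_Ω`: for `k ≠ j`, there is an edge from `k` to `j` iff `Ω j k ≠ 0`. -/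
def edgeRel {n : ℕ} (Ω : Matrix (Fin n) (Fin n) ℝ) (k j : Fin n) : Prop :=
  k ≠ j ∧ Ω j k ≠ 0

/-- Reachability in `G_Ω`. -/
def reaches {n : ℕ} (Ω : Matrix (Fin n) (Fin n) ℝ) : Fin n → Fin n → Prop :=
  Relation.ReflTransGen (edgeRel Ω)

/-- `S` is a strongly connected component of `G_Ω`. -/
def IsSCC {n : ℕ} (Ω : Matrix (Fin n) (Fin n) ℝ) (S : Set (Fin n)) : Prop :=
  S.Nonempty ∧ ∀ u ∈ S, ∀ v : Fin n, (v ∈ S ↔ (reaches Ω u v ∧ reaches Ω v u))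

/-- A basin: a strongly connected component with no outgoing edges. -/
def IsBasin {n : ℕ} (Ω : Matrix (Fin n) (Fin n) ℝ) (S : Set (Fin n)) : Prop :=
  IsSCC Ω S ∧ ∀ j ∈ S, ∀ k : Fin n, k ∉ S → Ω k j = 0

/-- `N_B`: the union of all basins of `G_Ω`. -/
def basinUnion {n : ℕ} (Ω : Matrix (Fin n) (Fin n) ℝ) : Set (Fin n) :=
  {j | ∃ S : Set (Fin n), IsBasin Ω S ∧ j ∈ S}

/-- The diagonal 0-1 projector onto the coordinates in `S`. -/
noncomputable def setProj {n : ℕ} (S : Set (Fin n)) : Matrix (Fin n) (Fin n) ℂ :=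
  Matrix.diagonal fun j => if j ∈ S then 1 else 0

/-- `setProj S` commutes with any matrix whose nonzero entries only link
indices on the same side of `S`. -/
lemma commute_setProj_of {n : ℕ} (S : Set (Fin n)) (M : Matrix (Fin n) (Fin n) ℂ)
    (h : ∀ j k, M j k ≠ 0 → (j ∈ S ↔ k ∈ S)) : Commute (setProj S) M := by
  show setProj S * M = M * setProj S
  ext j k
  rw [setProj, Matrix.diagonal_mul, Matrix.mul_diagonal]
  by_cases hM : M j k = 0
  · simp [hM]
  · rcases h j k hM with hiff
    by_cases hj : j ∈ S
    · simp [hj, hiff.mp hj, mul_comm]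
    · rw [if_neg hj, if_neg (fun hk => hj (hiff.mpr hk)), zero_mul, mul_zero]

/-- Two basins sharing a point are equal. -/
lemma basin_eq_of_mem {n : ℕ} {Ω : Matrix (Fin n) (Fin n) ℝ} {S S' : Set (Fin n)}
    (hS : IsBasin Ω S) (hS' : IsBasin Ω S') {u : Fin n} (hu : u ∈ S) (hu' : u ∈ S') :
    S = S' := by
  ext v
  rw [hS.1.2 u hu v, hS'.1.2 u hu' v]

/-- A basin absorbs edges: if `k ∈ S` and there is an edge `k → j`, then `j ∈ S`. -/
lemma basin_absorbs {n : ℕ} {Ω : Matrix (Fin n) (Fin n) ℝ} {S : Set (Fin n)}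
    (hS : IsBasin Ω S) {k j : Fin n} (hk : k ∈ S) (hΩ : Ω j k ≠ 0) : j ∈ S := by
  by_contra hj
  exact hΩ (hS.2 k hk j hj)

theorem stmt11 (n N : ℕ) (σ : Fin N → Equiv.Perm (Fin n)) (d : Fin N → Fin n → ℂ)
    (L : Fin N → Matrix (Fin n) (Fin n) ℂ)
    (hL : ∀ α, L α = permMat n (σ α) * Matrix.diagonal (d α)) :
    ∀ S : Set (Fin n), IsBasin (weightMat L) S →
      (∀ α, Commute (setProj S)
        (setProj (basinUnion (weightMat L)) * L α * setProj (basinUnion (weightMat L)))) ∧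
      (∀ h : Fin n → ℂ, Commute (setProj S)
        (setProj (basinUnion (weightMat L)) * Matrix.diagonal h *
          setProj (basinUnion (weightMat L)))) := by
  intro S hS
  set Ω := weightMat L with hΩdef
  set B := basinUnion Ω with hBdef
  -- entries of a `P_B · M · P_B` corner
  have corner : ∀ M : Matrix (Fin n) (Fin n) ℂ, ∀ j k,
      (setProj B * M * setProj B) j k =
        (if j ∈ B then 1 else 0) * M j k * (if k ∈ B then 1 else 0) := by
    intro M j k
    rw [setProj, Matrix.mul_diagonal, Matrix.diagonal_mul]
  constructor
  · intro α
    apply commute_setProj_of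
    intro j k hne
    rw [corner] at hne
    have hjB : j ∈ B := by by_contra h'; simp [h'] at hne
    have hkB : k ∈ B := by by_contra h'; simp [h'] at hne
    have hLjk : L α j k ≠ 0 := by
      intro h'; rw [h'] at hne; simp at hne
    by_cases hjk : j = k
    · subst hjk; rfl
    -- there is an edge from k to j
    have hΩjk : Ω j k ≠ 0 := by
      rw [hΩdef, weightMat]
      simp only [Matrix.of_apply, if_neg hjk]
      intro hsum
      have h0 : ∀ β ∈ Finset.univ, ‖L β j k‖ ^ 2 = 0 := by
        rw [← Finset.sum_eq_zero_iff_of_nonneg (fun β _ => by positivity)]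
        exact hsum
      have := h0 α (Finset.mem_univ α)
      exact hLjk (by simpa using this)
    constructor
    · intro hjS
      -- k is in some basin S'; edge k → j forces j ∈ S', so S = S'
      obtain ⟨S', hS', hkS'⟩ := hkB
      have hjS' : j ∈ S' := basin_absorbs hS' hkS' hΩjk
      rw [basin_eq_of_mem hS hS' hjS hjS']
      exact hkS'
    · intro hkS
      exact basin_absorbs hS hkS hΩjk
  · intro h
    apply commute_setProj_of
    intro j k hne
    rw [corner] at hne
    have : j = k := by
      by_contra hjk
      rw [Matrix.diagonal_apply_ne _ hjk] at hne
      simp at hne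
    subst this; rfl
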